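/- Fix A ∈ [0,1]^{n×m}, b ∈ [0,1]^n. The set 𝒯 of matrices T ∈ [0,1]^{n×m} for which the max-min system T □ x = b is consistent is nonempty, and the infimum over T ∈ 𝒯 of ‖T − A‖_∞ (sup of absolute entrywise differences) is attained, i.e., there exists T* ∈ 𝒯 with ‖T* − A‖_∞ = inf_{T∈𝒯} ‖T − A‖_∞. -/

import Mathlib

open Finset

noncomputable def sigmaG (x y z : ℝ) : ℝ := min (max (x - z) 0 / 2) (max (y - z) 0)

noncomputable def maxminProd {n m : ℕ} [NeZero m] (T : Fin n → Fin m → ℝ)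
    (x : Fin m → ℝ) (i : Fin n) : ℝ :=
  Finset.univ.sup' Finset.univ_nonempty (fun j => min (T i j) (x j))

def IsConsistent {n m : ℕ} [NeZero m] (T : Fin n → Fin m → ℝ) (b : Fin n → ℝ) : Prop :=
  ∃ x : Fin m → ℝ, (∀ j, x j ∈ Set.Icc (0:ℝ) 1) ∧ ∀ i, maxminProd T x i = b i

def TSet {n m : ℕ} [NeZero m] (b : Fin n → ℝ) : Set (Fin n → Fin m → ℝ) :=
  {T | (∀ i j, T i j ∈ Set.Icc (0:ℝ) 1) ∧ IsConsistent T b}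

noncomputable def normInf {n m : ℕ} [NeZero n] [NeZero m] (X Y : Fin n → Fin m → ℝ) : ℝ :=
  Finset.univ.sup' Finset.univ_nonempty (fun p : Fin n × Fin m => |X p.1 p.2 - Y p.1 p.2|)

noncomputable def deltaE {n m : ℕ} [NeZero n] (b : Fin n → ℝ)
    (T : Fin n → Fin m → ℝ) (s : Fin n) (l : Fin m) : ℝ :=
  max (max (b s - T s l) 0)
    (Finset.univ.sup' Finset.univ_nonempty (fun k => sigmaG (b s) (T k l) (b k)))

noncomputable def deltaRow {n m : ℕ} [NeZero n] [NeZero m] (b : Fin n → ℝ)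
    (T : Fin n → Fin m → ℝ) (s : Fin n) : ℝ :=
  Finset.univ.inf' Finset.univ_nonempty (fun l => deltaE b T s l)

noncomputable def fmod {n m : ℕ} (b : Fin n → ℝ) (M : Fin n → Fin m → ℝ)
    (i : Fin n) (j : Fin m) : Fin n → Fin m → ℝ :=
  fun k l => if l = j then
      (if k = i then max (b i) (M i j)
       else if 0 < sigmaG (b i) (M k j) (b k) then b k else M k j)
    else M k l

noncomputable def applyMods {n m h : ℕ} (b : Fin n → ℝ) (A : Fin n → Fin m → ℝ)
    (vi : Fin h → Fin n) (vj : Fin h → Fin m) : Fin n → Fin m → ℝ :=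
  (List.finRange h).foldl (fun M lam => fmod b M (vi lam) (vj lam)) A



lemma tset_nonempty {n m : ℕ} [NeZero n] [NeZero m] (b : Fin n → ℝ)
    (hb : ∀ i, b i ∈ Set.Icc (0:ℝ) 1) :
    (TSet (n := n) (m := m) b).Nonempty := by
  refine ⟨fun i _ => b i, fun i j => hb i, fun j => (1:ℝ), fun j => ⟨zero_le_one, le_refl 1⟩, ?_⟩
  intro i
  unfold maxminProd
  simp only [min_eq_left (hb i).2, Finset.sup'_const]

lemma tset_compact {n m : ℕ} [NeZero n] [NeZero m] (b : Fin n → ℝ) :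
    IsCompact (TSet (n := n) (m := m) b) := by
  set S : Set ((Fin n → Fin m → ℝ) × (Fin m → ℝ)) :=
    {p | (∀ i j, p.1 i j ∈ Set.Icc (0:ℝ) 1) ∧ (∀ j, p.2 j ∈ Set.Icc (0:ℝ) 1) ∧
      ∀ i, maxminProd p.1 p.2 i = b i} with hS
  have hbox1 : IsCompact (Set.pi (Set.univ : Set (Fin n))
      (fun _ => Set.pi Set.univ (fun _ : Fin m => Set.Icc (0:ℝ) 1))) :=
    isCompact_univ_pi (fun _ => isCompact_univ_pi (fun _ => isCompact_Icc))
  have hbox2 : IsCompact (Set.pi (Set.univ : Set (Fin m)) (fun _ => Set.Icc (0:ℝ) 1)) :=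
    isCompact_univ_pi (fun _ => isCompact_Icc)
  have hsub : S ⊆ (Set.pi Set.univ (fun _ => Set.pi Set.univ (fun _ : Fin m => Set.Icc (0:ℝ) 1)))
      ×ˢ (Set.pi Set.univ (fun _ => Set.Icc (0:ℝ) 1)) := by
    rintro ⟨T, x⟩ ⟨h1, h2, _⟩
    exact ⟨fun i _ => fun j _ => h1 i j, fun j _ => h2 j⟩
  have hmmc : ∀ i : Fin n, Continuous
      (fun p : (Fin n → Fin m → ℝ) × (Fin m → ℝ) => maxminProd p.1 p.2 i) := by
    intro i
    unfold maxminProd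
    exact Continuous.finset_sup'_apply Finset.univ_nonempty (fun j _ =>
      Continuous.min (((continuous_apply j).comp ((continuous_apply i).comp continuous_fst)))
        ((continuous_apply j).comp continuous_snd))
  have hSclosed : IsClosed S := by
    have h1 : IsClosed {p : (Fin n → Fin m → ℝ) × (Fin m → ℝ) | ∀ i j, p.1 i j ∈ Set.Icc (0:ℝ) 1} := by
      have : {p : (Fin n → Fin m → ℝ) × (Fin m → ℝ) | ∀ i j, p.1 i j ∈ Set.Icc (0:ℝ) 1}
          = ⋂ i, ⋂ j, (fun p : (Fin n → Fin m → ℝ) × (Fin m → ℝ) => p.1 i j) ⁻¹' Set.Icc 0 1 := by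
        ext p; simp [Set.mem_iInter]
      rw [this]
      exact isClosed_iInter (fun i => isClosed_iInter (fun j =>
        IsClosed.preimage ((continuous_apply j).comp ((continuous_apply i).comp continuous_fst))
          isClosed_Icc))
    have h2 : IsClosed {p : (Fin n → Fin m → ℝ) × (Fin m → ℝ) | ∀ j, p.2 j ∈ Set.Icc (0:ℝ) 1} := by
      have : {p : (Fin n → Fin m → ℝ) × (Fin m → ℝ) | ∀ j, p.2 j ∈ Set.Icc (0:ℝ) 1}
          = ⋂ j, (fun p : (Fin n → Fin m → ℝ) × (Fin m → ℝ) => p.2 j) ⁻¹' Set.Icc 0 1 := by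
        ext p; simp [Set.mem_iInter]
      rw [this]
      exact isClosed_iInter (fun j =>
        IsClosed.preimage ((continuous_apply j).comp continuous_snd) isClosed_Icc)
    have h3 : IsClosed {p : (Fin n → Fin m → ℝ) × (Fin m → ℝ) | ∀ i, maxminProd p.1 p.2 i = b i} := by
      have : {p : (Fin n → Fin m → ℝ) × (Fin m → ℝ) | ∀ i, maxminProd p.1 p.2 i = b i}
          = ⋂ i, (fun p : (Fin n → Fin m → ℝ) × (Fin m → ℝ) => maxminProd p.1 p.2 i) ⁻¹' {b i} := by
        ext p; simp [Set.mem_iInter]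
      rw [this]
      exact isClosed_iInter (fun i => IsClosed.preimage (hmmc i) isClosed_singleton)
    have : S = _ ∩ (_ ∩ _) := rfl
    exact h1.inter (h2.inter h3)
  have hScompact : IsCompact S :=
    (hbox1.prod hbox2).of_isClosed_subset hSclosed hsub
  have himg : TSet (n := n) (m := m) b = Prod.fst '' S := by
    ext T
    constructor
    · rintro ⟨h1, x, hx, hx2⟩
      exact ⟨⟨T, x⟩, ⟨h1, hx, hx2⟩, rfl⟩
    · rintro ⟨⟨T', x⟩, ⟨h1, h2, h3⟩, rfl⟩
      exact ⟨h1, x, h2, h3⟩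
  rw [himg]
  exact hScompact.image continuous_fst

lemma normInf_continuous {n m : ℕ} [NeZero n] [NeZero m] (A : Fin n → Fin m → ℝ) :
    Continuous (fun T : Fin n → Fin m → ℝ => normInf T A) := by
  unfold normInf
  exact Continuous.finset_sup'_apply Finset.univ_nonempty (fun p _ =>
    (Continuous.sub (show Continuous (fun T : Fin n → Fin m → ℝ => T p.1 p.2) from
      (continuous_apply p.2).comp (continuous_apply p.1)) continuous_const).abs)

theorem stmt6 {n m : ℕ} [NeZero n] [NeZero m]
    (A : Fin n → Fin m → ℝ) (b : Fin n → ℝ)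
    (hA : ∀ i j, A i j ∈ Set.Icc (0:ℝ) 1) (hb : ∀ i, b i ∈ Set.Icc (0:ℝ) 1) :
    (TSet (n := n) (m := m) b).Nonempty ∧
      ∃ Tstar ∈ TSet (n := n) (m := m) b,
        normInf Tstar A = sInf ((fun T => normInf T A) '' TSet (n := n) (m := m) b) := by
  have hne := tset_nonempty (n := n) (m := m) b hb
  have hcomp := tset_compact (n := n) (m := m) b
  refine ⟨hne, ?_⟩
  have himg : IsCompact ((fun T => normInf T A) '' TSet (n := n) (m := m) b) :=
    hcomp.image (normInf_continuous A)
  have himgne : ((fun T => normInf T A) '' TSet (n := n) (m := m) b).Nonempty :=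
    hne.image _
  have := himg.sInf_mem himgne
  obtain ⟨T, hT, hTe⟩ := this
  exact ⟨T, hT, hTe⟩
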